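/- Every vector lattice with a cofinal family of band-projections satisfies condition (*): for every band B and every x ∉ B^d, there exists a semi-component of x belonging to B. In particular, any nonzero band-projection [B']x with B' a projection band contained in B is such a semi-component. -/
import Mathlib


/-- Disjointness in a vector lattice. -/
def disjt {X : Type*} [Lattice X] [AddCommGroup X] (x y : X) : Prop := |x| ⊓ |y| = 0

/-- Disjoint complement of a set. -/
def dComp {X : Type*} [Lattice X] [AddCommGroup X] (S : Set X) : Set X :=
  {x | ∀ y ∈ S, disjt x y}

/-- A band (in an Archimedean vector lattice) is a disjoint complement. -/
def IsBand {X : Type*} [Lattice X] [AddCommGroup X] (B : Set X) : Prop :=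
  ∃ S : Set X, B = dComp S

/-- A projection band. -/
def IsProjBand {X : Type*} [Lattice X] [AddCommGroup X] (B : Set X) : Prop :=
  IsBand B ∧ ∀ x : X, ∃ b ∈ B, ∃ c ∈ dComp B, x = b + c

/-- `P` is the band-projection onto the projection band `B`. -/
def IsBandProjOnto {X : Type*} [Lattice X] [AddCommGroup X] [Module ℝ X]
    (B : Set X) (P : X →ₗ[ℝ] X) : Prop :=
  IsProjBand B ∧ ∀ x : X, P x ∈ B ∧ x - P x ∈ dComp B

/-- `P` is a band-projection. -/
def IsBandProj {X : Type*} [Lattice X] [AddCommGroup X] [Module ℝ X]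
    (P : X →ₗ[ℝ] X) : Prop := ∃ B : Set X, IsBandProjOnto B P

/-- A band preserving operator. -/
def BandPreserving {X : Type*} [Lattice X] [AddCommGroup X] [Module ℝ X]
    (T : X →ₗ[ℝ] X) : Prop := ∀ x y : X, disjt x y → disjt (T x) y

/-- A cofinal family of projection bands. -/
def CofinalProjBands (X : Type*) [Lattice X] [AddCommGroup X] : Prop :=
  ∀ B : Set X, IsBand B → B ≠ {0} →
    ∃ B' : Set X, IsProjBand B' ∧ B' ≠ {0} ∧ B' ⊆ B

/-- d-independence of a family (band-free sense). -/
def dIndepFam {X : Type*} [Lattice X] [AddCommGroup X] [Module ℝ X]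
    {ι : Type*} (f : ι → X) : Prop :=
  ∀ B : Set X, IsBand B → ∀ (t : Finset ι) (c : ι → ℝ),
    (∀ j ∈ t, c j ≠ 0) → (∑ j ∈ t, c j • f j) ∈ dComp B → ∀ j ∈ t, f j ∈ dComp B

/-- d-independence of a set (band-free sense). -/
def dIndepSet {X : Type*} [Lattice X] [AddCommGroup X] [Module ℝ X]
    (s : Set X) : Prop := dIndepFam (fun x : s => (x : X))

/-- A full system of pairwise disjoint bands. -/
def FullDisjBands {X : Type*} [Lattice X] [AddCommGroup X] (𝒞 : Set (Set X)) : Prop :=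
  (∀ B ∈ 𝒞, IsBand B) ∧
  (∀ B ∈ 𝒞, ∀ B' ∈ 𝒞, B ≠ B' → ∀ a ∈ B, ∀ b ∈ B', disjt a b) ∧
  (∀ z : X, (∀ B ∈ 𝒞, z ∈ dComp B) → z = 0)

/-- A d-basis (band-free sense). -/
def IsDBasis {X : Type*} [Lattice X] [AddCommGroup X] [Module ℝ X]
    (s : Set X) : Prop :=
  dIndepSet s ∧ ∀ x : X, ∃ 𝒞 : Set (Set X), FullDisjBands 𝒞 ∧
    ∀ B ∈ 𝒞, ∃ (t : Finset X) (c : X → ℝ), (↑t ⊆ s) ∧ (∀ e ∈ t, c e ≠ 0) ∧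
      (x - ∑ e ∈ t, c e • e) ∈ dComp B

/-- `b` is a semi-component of `x`. -/
def IsSemiComponent {X : Type*} [Lattice X] [AddCommGroup X] [Module ℝ X]
    (x b : X) : Prop :=
  b ≠ 0 ∧ ∃ (𝒞 : Set (Set X)) (c : Set X → ℝ), FullDisjBands 𝒞 ∧
    ∀ B ∈ 𝒞, (b - c B • x) ∈ dComp B

/-- Condition (*): every band has a semi-component of every element not disjoint from it. -/
def CondStar (X : Type*) [Lattice X] [AddCommGroup X] [Module ℝ X] : Prop :=
  ∀ B : Set X, IsBand B → ∀ x : X, x ∉ dComp B → ∃ b ∈ B, IsSemiComponent x b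
/-- Projection-band-sense d-independence of a family. -/
def dIndepProjFam {X : Type*} [Lattice X] [AddCommGroup X] [Module ℝ X]
    {ι : Type*} (f : ι → X) : Prop :=
  ∀ (B : Set X) (P : X →ₗ[ℝ] X), IsBandProjOnto B P →
    ∀ (t : Finset ι) (c : ι → ℝ), (∑ j ∈ t, c j • P (f j)) = 0 →
      ∀ j ∈ t, P (f j) ≠ 0 → c j = 0

/-- Projection-band-sense d-independence of a set. -/
def dIndepProjSet {X : Type*} [Lattice X] [AddCommGroup X] [Module ℝ X]
    (s : Set X) : Prop := dIndepProjFam (fun x : s => (x : X))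

/-- Lateral completeness. -/
def LatComplete (X : Type*) [Lattice X] [AddCommGroup X] : Prop :=
  ∀ S : Set X, (∀ x ∈ S, 0 ≤ x) → S.Pairwise disjt → ∃ b : X, IsLUB S b

/-- Lateral completeness of a subset (sups taken relative to the subset). -/
def LatCompleteIn {X : Type*} [Lattice X] [AddCommGroup X] (X₀ : Set X) : Prop :=
  ∀ S : Set X, S ⊆ X₀ → (∀ x ∈ S, 0 ≤ x) → S.Pairwise disjt →
    ∃ b ∈ X₀, b ∈ upperBounds S ∧ ∀ b' ∈ X₀, b' ∈ upperBounds S → b ≤ b'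

/-- Dedekind completeness of a subset (sups relative to the subset). -/
def DedekindCompleteIn {X : Type*} [Lattice X] [AddCommGroup X] (X₀ : Set X) : Prop :=
  ∀ S : Set X, S ⊆ X₀ → S.Nonempty → (∃ u ∈ X₀, u ∈ upperBounds S) →
    ∃ b ∈ X₀, b ∈ upperBounds S ∧ ∀ b' ∈ X₀, b' ∈ upperBounds S → b ≤ b'

/-- Universal completeness of a subset. -/
def UnivCompleteIn {X : Type*} [Lattice X] [AddCommGroup X] (X₀ : Set X) : Prop :=
  LatCompleteIn X₀ ∧ DedekindCompleteIn X₀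

/-- Disjoint complement of `S` relative to the sublattice `X₀`. -/
def dCompIn {X : Type*} [Lattice X] [AddCommGroup X] (X₀ S : Set X) : Set X :=
  {x | x ∈ X₀ ∧ ∀ y ∈ S, disjt x y}

/-- Bands of the sublattice `X₀`. -/
def IsBandIn {X : Type*} [Lattice X] [AddCommGroup X] (X₀ B : Set X) : Prop :=
  ∃ S : Set X, S ⊆ X₀ ∧ B = dCompIn X₀ S

/-- Projection bands of the sublattice `X₀`. -/
def IsProjBandIn {X : Type*} [Lattice X] [AddCommGroup X] (X₀ B : Set X) : Prop :=
  IsBandIn X₀ B ∧ ∀ x ∈ X₀, ∃ b ∈ B, ∃ c ∈ dCompIn X₀ B, x = b + c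

/-- A band `B` is principally universally complete if each of its principal bands
is universally complete. -/
def PrincUnivCompleteIn {X : Type*} [Lattice X] [AddCommGroup X] (B : Set X) : Prop :=
  ∀ u ∈ B, UnivCompleteIn (dCompIn B (dCompIn B {u}))

/-- d-independence of a family relative to the sublattice `X₀`. -/
def dIndepFamIn {X : Type*} [Lattice X] [AddCommGroup X] [Module ℝ X]
    (X₀ : Set X) {ι : Type*} (f : ι → X) : Prop :=
  ∀ B : Set X, IsBandIn X₀ B → ∀ (t : Finset ι) (c : ι → ℝ),
    (∀ j ∈ t, c j ≠ 0) → (∑ j ∈ t, c j • f j) ∈ dCompIn X₀ B →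
      ∀ j ∈ t, f j ∈ dCompIn X₀ B

/-- A full system of pairwise disjoint bands of the sublattice `X₀`. -/
def FullDisjBandsIn {X : Type*} [Lattice X] [AddCommGroup X]
    (X₀ : Set X) (𝒞 : Set (Set X)) : Prop :=
  (∀ B ∈ 𝒞, IsBandIn X₀ B) ∧
  (∀ B ∈ 𝒞, ∀ B' ∈ 𝒞, B ≠ B' → ∀ a ∈ B, ∀ b ∈ B', disjt a b) ∧
  (∀ z ∈ X₀, (∀ B ∈ 𝒞, z ∈ dCompIn X₀ B) → z = 0)

/-- A d-basis of the sublattice `X₀`. -/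
def IsDBasisIn {X : Type*} [Lattice X] [AddCommGroup X] [Module ℝ X]
    (X₀ : Set X) (s : Set X) : Prop :=
  dIndepFamIn X₀ (fun x : s => (x : X)) ∧
  ∀ x ∈ X₀, ∃ 𝒞 : Set (Set X), FullDisjBandsIn X₀ 𝒞 ∧
    ∀ B ∈ 𝒞, ∃ (t : Finset X) (c : X → ℝ), (↑t ⊆ s) ∧ (∀ e ∈ t, c e ≠ 0) ∧
      (x - ∑ e ∈ t, c e • e) ∈ dCompIn X₀ B

/-- An essentially constant continuous function. -/
def EssConst {K : Type*} [TopologicalSpace K] (f : C(K, ℝ)) : Prop :=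
  ∀ G : Set K, IsOpen G → G.Nonempty →
    ∃ G₁ ⊆ G, IsOpen G₁ ∧ G₁.Nonempty ∧ ∃ c : ℝ, ∀ t ∈ G₁, f t = c



section AuxSemiComp
variable {X : Type*} [Lattice X] [AddCommGroup X]
  [CovariantClass X X (· + ·) (· ≤ ·)]

omit [CovariantClass X X (· + ·) (· ≤ ·)] in
lemma disjt_symm' {x y : X} (h : disjt x y) : disjt y x := by
  rwa [disjt, inf_comm]

lemma abs_inf_nonneg' (x y : X) : (0:X) ≤ |x| ⊓ |y| := le_inf (abs_nonneg x) (abs_nonneg y)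

omit [CovariantClass X X (· + ·) (· ≤ ·)] in
lemma disjt_neg_left' {x y : X} (h : disjt x y) : disjt (-x) y := by
  rwa [disjt, abs_neg]

/-- Key Riesz-type inequality in lattice ordered groups. -/
lemma inf_add_le_riesz {a b c : X} (ha : 0 ≤ a) (hb : 0 ≤ b) (hc : 0 ≤ c) :
    a ⊓ (b + c) ≤ a ⊓ b + a ⊓ c := by
  set d := a ⊓ (b + c) with hd
  have key1 : d - a ⊓ b ≤ a := by
    calc d - a ⊓ b ≤ d - 0 := by
          exact sub_le_sub_left (le_inf ha hb) d
      _ = d := by rw [sub_zero]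
      _ ≤ a := inf_le_left
  have huv : (0 ⊔ (a - b)) ⊓ (0 ⊔ (b - a)) = 0 := by
    have := posPart_inf_negPart_eq_zero (a - b)
    simpa [posPart_def, negPart_def, neg_sub, sup_comm] using this
  have e1 : a - a ⊓ b = 0 ⊔ (a - b) := by rw [sub_inf, sub_self]
  have h2 : d - a ⊓ b ≤ 0 ⊔ (a - b) :=
    e1 ▸ (sub_le_sub_right inf_le_left _ : d - a ⊓ b ≤ a - a ⊓ b)
  have h3 : d - a ⊓ b ≤ (0 ⊔ (b - a)) + c := by
    have e2 : b - a ⊓ b = 0 ⊔ (b - a) := by rw [sub_inf, sub_self, sup_comm]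
    have e : (b + c) - a ⊓ b = (b - a ⊓ b) + c := by abel
    calc d - a ⊓ b ≤ (b + c) - a ⊓ b := sub_le_sub_right inf_le_right _
      _ = (0 ⊔ (b - a)) + c := by rw [e, e2]
  have hL1 : (0 ⊔ (a - b)) ⊓ ((0 ⊔ (b - a)) + c) ≤ c := by
    set u := 0 ⊔ (a - b)
    set v := 0 ⊔ (b - a)
    have : u ⊓ (v + c) - c ≤ 0 := by
      have e : u ⊓ (v + c) - c = (u - c) ⊓ v := by
        rw [inf_sub]
        congr 1
        abel
      rw [e]
      calc (u - c) ⊓ v ≤ u ⊓ v := inf_le_inf_right v (sub_le_self u hc)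
        _ = 0 := huv
    have := sub_nonpos.1 this
    exact this
  have : d - a ⊓ b ≤ a ⊓ c := le_inf key1 (le_trans (le_inf h2 h3) hL1)
  have := add_le_add_right this (a ⊓ b)
  simpa [sub_add_cancel, add_comm] using this

lemma abs_add_lat (a b : X) : |a + b| ≤ |a| + |b| :=
  abs_le'.2 ⟨add_le_add (le_abs_self a) (le_abs_self b), by
    rw [neg_add]; exact add_le_add (neg_le_abs a) (neg_le_abs b)⟩

lemma disjt_add' {z a b : X} (h1 : disjt z a) (h2 : disjt z b) : disjt z (a + b) := by
  have hle : |z| ⊓ |a + b| ≤ 0 := by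
    calc |z| ⊓ |a + b| ≤ |z| ⊓ (|a| + |b|) := inf_le_inf_left _ (abs_add_lat a b)
      _ ≤ |z| ⊓ |a| + |z| ⊓ |b| :=
          inf_add_le_riesz (abs_nonneg z) (abs_nonneg a) (abs_nonneg b)
      _ = 0 := by rw [h1, h2, add_zero]
  exact le_antisymm hle (abs_inf_nonneg' z (a + b))

lemma disjt_self_eq_zero {z : X} (h : disjt z z) : z = 0 := by
  have habs : |z| = 0 := by rw [disjt, inf_idem] at h; exact h
  have h1 : z ≤ 0 := habs ▸ le_abs_self z
  have h2 : -z ≤ 0 := habs ▸ neg_le_abs z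
  exact le_antisymm h1 (neg_nonpos.1 h2)

lemma zero_mem_dComp' (S : Set X) : (0 : X) ∈ dComp S := by
  intro y _
  show |(0:X)| ⊓ |y| = 0
  rw [abs_zero]
  exact le_antisymm inf_le_left (le_inf le_rfl (abs_nonneg y))

omit [CovariantClass X X (· + ·) (· ≤ ·)] in
lemma neg_mem_dComp' {S : Set X} {z : X} (h : z ∈ dComp S) : -z ∈ dComp S :=
  fun y hy => disjt_neg_left' (h y hy)

omit [CovariantClass X X (· + ·) (· ≤ ·)] in
lemma self_mem_ddComp (w : X) : w ∈ dComp (dComp {w}) := by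
  intro u hu
  exact disjt_symm' (hu w rfl)

end AuxSemiComp

/-- The component of `x` in a projection band `B'` is a semi-component of `x`
(provided it is nonzero). -/
lemma semiComponent_of_projBand
    {X : Type*} [Lattice X] [AddCommGroup X] [Module ℝ X]
    [CovariantClass X X (· + ·) (· ≤ ·)]
    {B' : Set X} (hB' : IsProjBand B') {x b : X} (hb : b ∈ B')
    (hxb : x - b ∈ dComp B') (hbne : b ≠ 0) : IsSemiComponent x b := by
  classical
  have hBB' : ∀ u ∈ B', u ∈ dComp (dComp B') := by
    intro u hu v hv
    exact disjt_symm' (hv u hu)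
  refine ⟨hbne, {B', dComp B'}, fun S => if S = B' then 1 else 0, ?_, ?_⟩
  · refine ⟨?_, ?_, ?_⟩
    · rintro B (rfl | rfl)
      · exact hB'.1
      · exact ⟨B', rfl⟩
    · rintro B1 (rfl | rfl) B2 (rfl | rfl) hne a ha c hc
      · exact absurd rfl hne
      · exact disjt_symm' (hc a ha)
      · exact ha c hc
      · exact absurd rfl hne
    · intro z hz
      have h1 : z ∈ dComp B' := hz B' (Set.mem_insert _ _)
      have h2 : z ∈ dComp (dComp B') :=
        hz (dComp B') (Set.mem_insert_of_mem _ rfl)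
      obtain ⟨b₀, hb₀, c₀, hc₀, hzeq⟩ := hB'.2 z
      have hd : disjt z (b₀ + c₀) := disjt_add' (h1 b₀ hb₀) (h2 c₀ hc₀)
      rw [← hzeq] at hd
      exact disjt_self_eq_zero hd
  · intro C hC
    rcases Set.mem_insert_iff.1 hC with hCB | hCd
    · rw [hCB]
      have hc : ((fun S => if S = B' then (1:ℝ) else 0) B') = 1 := if_pos rfl
      rw [hc, one_smul]
      have : b - x = -(x - b) := by abel
      rw [this]
      exact neg_mem_dComp' hxb
    · rw [Set.mem_singleton_iff] at hCd
      rw [hCd]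
      have hne : dComp B' ≠ B' := by
        intro h
        have : b ∈ dComp B' := by rw [h]; exact hb
        exact hbne (disjt_self_eq_zero (this b hb))
      have hc : ((fun S => if S = B' then (1:ℝ) else 0) (dComp B')) = 0 := if_neg hne
      rw [hc, zero_smul, sub_zero]
      exact hBB' b hb


/-- Every vector lattice with a cofinal family of band-projections
satisfies condition (*); in particular, any nonzero band-projection of `x` onto a
projection band contained in `B` is a semi-component of `x` in `B`. -/
theorem cofinalProjBands_implies_condStar
    {X : Type*} [Lattice X] [AddCommGroup X] [Module ℝ X]
    [CovariantClass X X (· + ·) (· ≤ ·)] [PosSMulMono ℝ X]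
    (hcof : CofinalProjBands X) :
    CondStar X ∧
      ∀ B : Set X, IsBand B → ∀ x : X, x ∉ dComp B →
        ∀ (B' : Set X) (P : X →ₗ[ℝ] X), B' ⊆ B → IsBandProjOnto B' P →
          P x ≠ 0 → P x ∈ B ∧ IsSemiComponent x (P x) := by
  have star : CondStar X := by
    intro B hB x hx
    have hx' : ∃ y ∈ B, ¬ disjt x y := by
      by_contra h
      push_neg at h
      exact hx h
    obtain ⟨y, hyB, hxy⟩ := hx'
    set w := |x| ⊓ |y| with hw
    have hwne : w ≠ 0 := hxy
    have hw0 : 0 ≤ w := abs_inf_nonneg' x y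
    set B'' := dComp (dComp {w}) with hB''
    have hB''band : IsBand B'' := ⟨_, rfl⟩
    have hwB'' : w ∈ B'' := self_mem_ddComp w
    have hB''ne : B'' ≠ {0} := by
      intro h
      rw [h] at hwB''
      exact hwne hwB''
    obtain ⟨B', hB'proj, hB'ne, hB'sub⟩ := hcof B'' hB''band hB''ne
    obtain ⟨S, rfl⟩ := hB
    have hwB : w ∈ dComp S := by
      intro z hz
      show |w| ⊓ |z| = 0
      rw [abs_of_nonneg hw0]
      have h1 : w ⊓ |z| ≤ |y| ⊓ |z| := inf_le_inf_right _ inf_le_right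
      rw [hyB z hz] at h1
      exact le_antisymm h1 (le_inf hw0 (abs_nonneg z))
    have hB''B : B'' ⊆ dComp S := by
      intro v hv z hz
      have hzw : z ∈ dComp ({w} : Set X) := by
        rintro u rfl
        exact disjt_symm' (hwB z hz)
      exact hv z hzw
    obtain ⟨b, hbB', c₀, hc₀, hxeq⟩ := hB'proj.2 x
    have hxb : x - b ∈ dComp B' := by
      have : x - b = c₀ := by rw [hxeq]; abel
      rw [this]; exact hc₀
    have hbne : b ≠ 0 := by
      intro h0
      have hxc : x = c₀ := by rw [hxeq, h0, zero_add]
      have hex : ∃ b' ∈ B', b' ≠ 0 := by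
        by_contra h
        push_neg at h
        apply hB'ne
        apply Set.eq_singleton_iff_unique_mem.2
        constructor
        · obtain ⟨S', hS'⟩ := hB'proj.1
          rw [hS']
          exact zero_mem_dComp' S'
        · exact h
      obtain ⟨b', hb'B', hb'ne⟩ := hex
      have hxb' : disjt x b' := by rw [hxc]; exact hc₀ b' hb'B'
      have hb'w : b' ∈ dComp ({w} : Set X) := by
        rintro u rfl
        show |b'| ⊓ |w| = 0
        rw [abs_of_nonneg hw0]
        have h1 : |b'| ⊓ w ≤ |b'| ⊓ |x| := inf_le_inf_left _ inf_le_left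
        rw [disjt_symm' hxb'] at h1
        exact le_antisymm h1 (le_inf (abs_nonneg b') hw0)
      have : disjt b' b' := hB'sub hb'B' b' hb'w
      exact hb'ne (disjt_self_eq_zero this)
    exact ⟨b, hB''B (hB'sub hbB'),
      semiComponent_of_projBand hB'proj hbB' hxb hbne⟩
  refine ⟨star, ?_⟩
  intro B hB x hx B' P hsub hP hPx
  obtain ⟨hproj, hall⟩ := hP
  refine ⟨hsub (hall x).1, ?_⟩
  exact semiComponent_of_projBand hproj (hall x).1 (hall x).2 hPx
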